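/- arXiv:2508.07303 — 4 statements merged into one kernel-verified Lean document; each statement's English description precedes it below -/
import Mathlib

section
/- If a_1, a_2, ..., a_n are integers with |a_i| ≥ 3 for all i, then the value of the continued fraction [0; a_1, ..., a_n] = 1/(a_1 + 1/(a_2 + ... + 1/a_n)) has absolute value at most (3 - √5)/2, and in particular strictly less than 1/2. -/
/-- The continued fraction value `[c₁; c₂, …, cₙ] = c₁ + 1/(c₂ + 1/(⋯ + 1/cₙ))`.
With this definition, `[0; a₁, …, aₙ] = 1 / cfrac [a₁, …, aₙ]`. -/
noncomputable def cfrac : List ℤ → ℝ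
  | [] => 0
  | a :: l => a + 1 / cfrac l

/-- If all partial denominators satisfy `|aᵢ| ≥ 3`, then the continued fraction
`[0; a₁, …, aₙ]` has absolute value at most `(3 - √5)/2`, and in particular
strictly less than `1/2`. -/
theorem abs_cfrac_zero_le (l : List ℤ) (hl : l ≠ [])
    (h : ∀ a ∈ l, 3 ≤ |a|) :
    |1 / cfrac l| ≤ (3 - Real.sqrt 5) / 2 ∧ |1 / cfrac l| < 1 / 2 := by
  have s5nn : (0:ℝ) ≤ Real.sqrt 5 := Real.sqrt_nonneg 5
  have s5sq : Real.sqrt 5 ^ 2 = 5 := Real.sq_sqrt (by norm_num)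
  have s5lt : Real.sqrt 5 < 3 := by nlinarith [Real.sq_sqrt (show (0:ℝ) ≤ 5 by norm_num)]
  have s5gt : (2:ℝ) < Real.sqrt 5 := by nlinarith
  have key : ∀ L : List ℤ, L ≠ [] → (∀ a ∈ L, 3 ≤ |a|) →
      (3 + Real.sqrt 5) / 2 ≤ |cfrac L| := by
    intro L
    induction L with
    | nil => intro hne; exact absurd rfl hne
    | cons a t ih =>
      intro _ hall
      have ha : (3:ℝ) ≤ |(a:ℝ)| := by
        have := hall a List.mem_cons_self
        exact_mod_cast (by exact_mod_cast this : ((3:ℤ):ℝ) ≤ (|a| : ℝ))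
      show (3 + Real.sqrt 5) / 2 ≤ |(a:ℝ) + 1 / cfrac t|
      by_cases ht : t = []
      · subst ht
        simp only [cfrac, div_zero, add_zero]
        nlinarith
      · have hIH := ih ht (fun b hb => hall b (List.mem_cons_of_mem a hb))
        have hpos : (0:ℝ) < (3 + Real.sqrt 5) / 2 := by nlinarith
        have hct : (0:ℝ) < |cfrac t| := lt_of_lt_of_le hpos hIH
        have hinv : |1 / cfrac t| ≤ (3 - Real.sqrt 5) / 2 := by
          rw [abs_div, abs_one, div_le_iff₀ hct]
          nlinarith
        have habs : |(a:ℝ)| - |1 / cfrac t| ≤ |(a:ℝ) + 1 / cfrac t| := by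
          have := abs_sub_abs_le_abs_sub ((a:ℝ)) (-(1 / cfrac t))
          simp only [abs_neg, sub_neg_eq_add] at this
          linarith
        linarith
  have hk := key l hl h
  have hpos : (0:ℝ) < (3 + Real.sqrt 5) / 2 := by nlinarith
  have hct : (0:ℝ) < |cfrac l| := lt_of_lt_of_le hpos hk
  have h1 : |1 / cfrac l| ≤ (3 - Real.sqrt 5) / 2 := by
    rw [abs_div, abs_one, div_le_iff₀ hct]
    nlinarith
  exact ⟨h1, lt_of_le_of_lt h1 (by nlinarith)⟩
end

section
/- If [a_0; a_1, ..., a_n] = [b_0; b_1, ..., b_m] are two continued fraction expansions of the same rational number with all |a_i| ≥ 3 and all |b_j| ≥ 3, then n = m and a_i = b_i for all 0 ≤ i ≤ n. -/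
lemma cfrac_key : ∀ l : List ℤ, (∀ x ∈ l, 3 ≤ |x|) →
    |1 / cfrac l| < 1/2 ∧ (l ≠ [] → 2 < |cfrac l|) := by
  intro l
  induction l with
  | nil => intro _; constructor <;> simp [cfrac]
  | cons a t ih =>
    intro h
    have ht := ih (fun x hx => h x (List.mem_cons_of_mem a hx))
    have ha : (3:ℝ) ≤ |(a:ℝ)| := by
      have := h a (List.mem_cons_self)
      calc (3:ℝ) ≤ ((|a| : ℤ) : ℝ) := by exact_mod_cast this
        _ = |(a:ℝ)| := by push_cast; ring
    have hsmall : |1 / cfrac t| < 1/2 := ht.1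
    have hbig : 2 < |cfrac (a :: t)| := by
      have hc : cfrac (a :: t) = (a:ℝ) + 1 / cfrac t := rfl
      rw [hc]
      have h1 : |(a:ℝ)| ≤ |(a:ℝ) + 1 / cfrac t| + |1 / cfrac t| := by
        have := abs_add_le ((a:ℝ) + 1 / cfrac t) (-(1 / cfrac t))
        simpa using this
      linarith
    refine ⟨?_, fun _ => hbig⟩
    have hpos : (0:ℝ) < |cfrac (a :: t)| := by linarith
    rw [abs_one_div]
    rw [div_lt_div_iff₀ hpos (by norm_num)]
    linarith

/-- Uniqueness of continued fraction expansions with all partial quotients of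
absolute value at least 3: if `[a₀; a₁, …, aₙ] = [b₀; b₁, …, b_m]` with all
`|aᵢ| ≥ 3` and all `|bⱼ| ≥ 3`, then `n = m` and `aᵢ = bᵢ` for all `i`. -/
theorem cfrac_unique (a b : List ℤ) (ha0 : a ≠ []) (hb0 : b ≠ [])
    (ha : ∀ x ∈ a, 3 ≤ |x|) (hb : ∀ x ∈ b, 3 ≤ |x|)
    (h : cfrac a = cfrac b) : a = b := by
  induction a generalizing b with
  | nil => exact absurd rfl ha0
  | cons a0 ta ih =>
    cases b with
    | nil => exact absurd rfl hb0
    | cons b0 tb =>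
      have hta := cfrac_key ta (fun x hx => ha x (List.mem_cons_of_mem _ hx))
      have htb := cfrac_key tb (fun x hx => hb x (List.mem_cons_of_mem _ hx))
      have hcf : (a0:ℝ) + 1 / cfrac ta = (b0:ℝ) + 1 / cfrac tb := h
      have hab : a0 = b0 := by
        have h1 : |((a0:ℝ) - (b0:ℝ))| < 1 := by
          have heq : (a0:ℝ) - (b0:ℝ) = 1 / cfrac tb - 1 / cfrac ta := by linarith
          rw [heq]
          have h2 := abs_sub (1 / cfrac tb) (1 / cfrac ta)
          linarith [hta.1, htb.1]
        have h3 : |a0 - b0| < 1 := by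
          have : |((a0 - b0 : ℤ) : ℝ)| < 1 := by push_cast; exact h1
          exact_mod_cast this
        have h4 := abs_lt.mp h3; omega
      subst hab
      have htl : 1 / cfrac ta = 1 / cfrac tb := by linarith
      cases ta with
      | nil =>
        cases tb with
        | nil => rfl
        | cons c tc =>
          exfalso
          have hne : cfrac (c :: tc) ≠ 0 := by
            intro h0
            have := htb.2 (by simp)
            rw [h0] at this
            norm_num at this
          have : (1:ℝ) / cfrac (c :: tc) = 0 := by
            rw [← htl]; simp [cfrac]
          exact hne (by simpa [div_eq_zero_iff] using this)
      | cons c tc =>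
        cases tb with
        | nil =>
          exfalso
          have hne : cfrac (c :: tc) ≠ 0 := by
            intro h0
            have := hta.2 (by simp)
            rw [h0] at this
            norm_num at this
          have : (1:ℝ) / cfrac (c :: tc) = 0 := by
            rw [htl]; simp [cfrac]
          exact hne (by simpa [div_eq_zero_iff] using this)
        | cons d td =>
          have hne1 : cfrac (c :: tc) ≠ 0 := by
            intro h0; have := hta.2 (by simp); rw [h0] at this; norm_num at this
          have hne2 : cfrac (d :: td) ≠ 0 := by
            intro h0; have := htb.2 (by simp); rw [h0] at this; norm_num at this
          have heq : cfrac (c :: tc) = cfrac (d :: td) := by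
            rw [← one_div_one_div (cfrac (c :: tc)), htl, one_div_one_div]
          have := ih (d :: td) (by simp) (by simp)
            (fun x hx => ha x (List.mem_cons_of_mem _ hx))
            (fun x hx => hb x (List.mem_cons_of_mem _ hx)) heq
          rw [this]
end

section
/- Let r = [a_1, -a_2, a_3, ..., ±a_n] and r' = [a_n, -a_{n-1}, ..., ±a_1] be the continued fractions of a sequence and its (sign-alternated) reversal, with all |a_i| ≥ 3. If {r, r'} = {s, s'} where s, s' are built the same way from b_1, ..., b_m with all |b_j| ≥ 3, then m = n and either a_i = b_i for all i or a_i = b_{n+1-i} for all i. -/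
/-- Apply the alternating signs: `[a₁, -a₂, a₃, -a₄, …]`. -/
def altSign (l : List ℤ) : List ℤ := l.mapIdx fun i a => (-1) ^ i * a

lemma cfrac_cons (c : ℤ) (l : List ℤ) : cfrac (c :: l) = c + 1 / cfrac l := rfl

lemma abs_cfrac_ge (l : List ℤ) (hl : l ≠ []) (h : ∀ x ∈ l, 3 ≤ |x|) :
    5/2 ≤ |cfrac l| := by
  induction l with
  | nil => simp at hl
  | cons c l ih =>
    have hc : (3:ℝ) ≤ |(c:ℝ)| := by
      have := h c (List.mem_cons_self)
      rw [← Int.cast_abs]; exact_mod_cast this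
    have hinv : |1 / cfrac l| ≤ 2/5 := by
      rcases eq_or_ne l [] with rfl | hl'
      · simp [cfrac]; norm_num
      · have h5 := ih hl' (fun x hx => h x (List.mem_cons_of_mem _ hx))
        have hpos : (0:ℝ) < |cfrac l| := lt_of_lt_of_le (by norm_num) h5
        rw [abs_div, abs_one, div_le_div_iff₀ hpos (by norm_num)]
        linarith
    have h1 : |(c:ℝ)| ≤ |(c:ℝ) + 1/cfrac l| + |1/cfrac l| := by
      have := abs_add_le ((c:ℝ) + 1/cfrac l) (-(1/cfrac l))
      simpa using this
    rw [cfrac_cons]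
    linarith

lemma inv_cfrac_le (l : List ℤ) (h : ∀ x ∈ l, 3 ≤ |x|) : |1 / cfrac l| ≤ 2/5 := by
  rcases eq_or_ne l [] with rfl | hl'
  · simp [cfrac]; norm_num
  · have h5 := abs_cfrac_ge l hl' h
    have hpos : (0:ℝ) < |cfrac l| := lt_of_lt_of_le (by norm_num) h5
    rw [abs_div, abs_one, div_le_div_iff₀ hpos (by norm_num)]
    linarith

lemma cfrac_ne_zero (l : List ℤ) (hl : l ≠ []) (h : ∀ x ∈ l, 3 ≤ |x|) :
    cfrac l ≠ 0 := by
  intro h0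
  have := abs_cfrac_ge l hl h
  rw [h0] at this
  norm_num at this

lemma cfrac_inj (l m : List ℤ) (hl : ∀ x ∈ l, 3 ≤ |x|) (hm : ∀ x ∈ m, 3 ≤ |x|)
    (heq : cfrac l = cfrac m) : l = m := by
  induction l generalizing m with
  | nil =>
    cases m with
    | nil => rfl
    | cons d m =>
      exfalso
      have := abs_cfrac_ge (d :: m) (by simp) hm
      rw [← heq] at this
      simp [cfrac] at this
      norm_num at this
  | cons c l ih =>
    cases m with
    | nil =>
      exfalso
      have := abs_cfrac_ge (c :: l) (by simp) hl
      rw [heq] at this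
      simp [cfrac] at this
      norm_num at this
    | cons d m =>
      have hl' : ∀ x ∈ l, 3 ≤ |x| := fun x hx => hl x (List.mem_cons_of_mem _ hx)
      have hm' : ∀ x ∈ m, 3 ≤ |x| := fun x hx => hm x (List.mem_cons_of_mem _ hx)
      rw [cfrac_cons, cfrac_cons] at heq
      have hil := inv_cfrac_le l hl'
      have him := inv_cfrac_le m hm'
      have hcd : c = d := by
        have habs : |((c - d : ℤ) : ℝ)| < 1 := by
          have : ((c:ℝ) - d) = 1 / cfrac m - 1 / cfrac l := by linarith
          push_cast
          rw [this]
          calc |1 / cfrac m - 1 / cfrac l| ≤ |1 / cfrac m| + |1 / cfrac l| :=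
                abs_sub _ _
            _ < 1 := by linarith
        have : |(c - d : ℤ)| < 1 := by exact_mod_cast habs
        have := abs_lt.mp this
        omega
      subst hcd
      have heq2 : 1 / cfrac l = 1 / cfrac m := by linarith
      rcases eq_or_ne l [] with rfl | hlne
      · rcases eq_or_ne m [] with rfl | hmne
        · rfl
        · exfalso
          have hmn0 := cfrac_ne_zero m hmne hm'
          simp [cfrac] at heq2
          exact hmn0 heq2.symm
      · rcases eq_or_ne m [] with rfl | hmne
        · exfalso
          have hln0 := cfrac_ne_zero l hlne hl'
          simp [cfrac] at heq2
          exact hln0 heq2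
        · have hln0 := cfrac_ne_zero l hlne hl'
          have hmn0 := cfrac_ne_zero m hmne hm'
          have : cfrac l = cfrac m := by
            field_simp at heq2
            linarith
          rw [ih m hl' hm' this]

lemma altSign_length (l : List ℤ) : (altSign l).length = l.length :=
  List.length_mapIdx

lemma altSign_altSign (l : List ℤ) : altSign (altSign l) = l := by
  apply List.ext_getElem
  · rw [altSign_length, altSign_length]
  · intro i h1 h2
    simp only [altSign, List.getElem_mapIdx]
    rw [← mul_assoc, ← mul_pow]
    norm_num

lemma altSign_abs (l : List ℤ) (h : ∀ x ∈ l, 3 ≤ |x|) :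
    ∀ x ∈ altSign l, 3 ≤ |x| := by
  intro x hx
  rw [altSign, List.mem_mapIdx] at hx
  obtain ⟨i, hi, rfl⟩ := hx
  rw [abs_mul, abs_pow, abs_neg, abs_one, one_pow, one_mul]
  exact h _ (List.getElem_mem hi)

lemma altSign_ne_nil (l : List ℤ) (h : l ≠ []) : altSign l ≠ [] := by
  intro h0
  have := altSign_length l
  rw [h0] at this
  simp at this
  exact h (List.length_eq_zero_iff.mp this.symm)

/-- Uniqueness of the 3-highly twisted Schubert normal form, arithmetic core:
if the unordered pair `{r, r'}` of continued fraction values of the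
sign-alternated sequence and its sign-alternated reversal agree for two
sequences with all entries of absolute value at least 3, then the sequences
agree up to reversal. -/
theorem schubert_pair_unique (a b : List ℤ) (ha0 : a ≠ []) (hb0 : b ≠ [])
    (ha : ∀ x ∈ a, 3 ≤ |x|) (hb : ∀ x ∈ b, 3 ≤ |x|)
    (h : ({cfrac (altSign a), cfrac (altSign a.reverse)} : Set ℝ)
        = {cfrac (altSign b), cfrac (altSign b.reverse)}) :
    a = b ∨ a = b.reverse := by
  have hbr : ∀ x ∈ b.reverse, 3 ≤ |x| := fun x hx => hb x (List.mem_reverse.mp hx)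
  have hmem : cfrac (altSign a) ∈
      ({cfrac (altSign b), cfrac (altSign b.reverse)} : Set ℝ) := by
    rw [← h]; exact Set.mem_insert _ _
  rcases hmem with heq | heq
  · left
    have := cfrac_inj (altSign a) (altSign b) (altSign_abs a ha) (altSign_abs b hb) heq
    have := congrArg altSign this
    rwa [altSign_altSign, altSign_altSign] at this
  · right
    have := cfrac_inj (altSign a) (altSign b.reverse) (altSign_abs a ha)
      (altSign_abs b.reverse hbr) heq
    have := congrArg altSign this
    rwa [altSign_altSign, altSign_altSign] at this
end

section
/- Let x_0 = 0 and define x_{j+1} = 1/(3 - x_j) for j ≥ 0 (the convergents-from-the-tail of [0; 3, -3, 3, -3, ...] in absolute value). Then the sequence (x_j) is increasing, bounded above by (3 - √5)/2, and for any integers a_1, ..., a_n with |a_i| ≥ 3, |[0; a_1, ..., a_n]| ≤ x_n ≤ (3 - √5)/2. -/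
/-- The tail-convergent recursion: `x₀ = 0`, `x_{j+1} = 1/(3 - xⱼ)` is
increasing, bounded above by `(3 - √5)/2`, and dominates the absolute value of
any continued fraction `[0; a₁, …, aₙ]` with all `|aᵢ| ≥ 3`. -/
theorem tail_recursion_bound (x : ℕ → ℝ)
    (hx0 : x 0 = 0) (hrec : ∀ j, x (j + 1) = 1 / (3 - x j)) :
    (∀ j, x j < x (j + 1)) ∧
    (∀ j, x j ≤ (3 - Real.sqrt 5) / 2) ∧
    (∀ l : List ℤ, (∀ a ∈ l, 3 ≤ |a|) → |1 / cfrac l| ≤ x l.length) := by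
  have hs : Real.sqrt 5 ^ 2 = 5 := Real.sq_sqrt (by norm_num)
  have hs2 : (2:ℝ) ≤ Real.sqrt 5 := by nlinarith [Real.sqrt_nonneg 5]
  have hs3 : Real.sqrt 5 ≤ 3 := by nlinarith [Real.sqrt_nonneg 5]
  set α := (3 - Real.sqrt 5) / 2 with hα
  have hα2 : α ≤ 1 / 2 := by rw [hα]; linarith
  have hα0 : 0 ≤ α := by rw [hα]; linarith
  have hb : ∀ j, 0 ≤ x j ∧ x j ≤ α := by
    intro j
    induction j with
    | zero => rw [hx0]; exact ⟨le_refl 0, hα0⟩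
    | succ n ih =>
      obtain ⟨h0, h1⟩ := ih
      have h3 : (0:ℝ) < 3 - x n := by linarith
      rw [hrec]
      refine ⟨by positivity, ?_⟩
      rw [div_le_iff₀ h3]
      nlinarith [mul_nonneg hα0 (sub_nonneg.mpr h1)]
  have hmono : ∀ j, x j < x (j + 1) := by
    intro j
    induction j with
    | zero => rw [hx0, hrec, hx0]; norm_num
    | succ n ih =>
      have h0 := (hb n).1
      have h1 := (hb n).2
      have h1' := (hb (n + 1)).2
      have h3 : (0:ℝ) < 3 - x (n + 1) := by linarith
      rw [hrec (n + 1)]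
      nth_rewrite 1 [hrec n]
      apply one_div_lt_one_div_of_lt h3
      linarith
  refine ⟨hmono, fun j => (hb j).2, ?_⟩
  intro l
  induction l with
  | nil => intro _; simp [cfrac, hx0]
  | cons a l ih =>
    intro h
    have ha : (3:ℝ) ≤ |(a:ℝ)| := by
      have := h a List.mem_cons_self
      exact_mod_cast this
    have hl := ih fun b hb => h b (List.mem_cons_of_mem a hb)
    have hxn0 := (hb l.length).1
    have hxn := (hb l.length).2
    have h3 : (0:ℝ) < 3 - x l.length := by linarith
    have habs : 3 - x l.length ≤ |(a:ℝ) + 1 / cfrac l| := by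
      have h4 := abs_sub_abs_le_abs_sub ((a:ℝ)) (-(1 / cfrac l))
      rw [abs_neg, sub_neg_eq_add] at h4
      have := abs_nonneg (1 / cfrac l)
      linarith
    show |1 / cfrac (a :: l)| ≤ x (l.length + 1)
    rw [hrec]
    simp only [cfrac, abs_div, abs_one]
    exact one_div_le_one_div_of_le h3 habs
end
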